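/- For c < 0 and all λ ≥ 0 in the common domain: λ²/(2(1−cλ)) ≤ (e^{2cλ} − 2cλ − 1)/(2c)²; i.e., ψ_{G,c} ≤ ψ_{P,2c} when c < 0. -/

import Mathlib

lemma key_aux (t : ℝ) (ht : 0 ≤ t) : 1 - t ≤ (1 + t) * Real.exp (-(2 * t)) := by
  set g : ℝ → ℝ := fun x => (1 + x) * Real.exp (-(2 * x)) + x with hg_def
  have hderiv : ∀ x : ℝ, HasDerivAt g
      (Real.exp (-(2 * x)) + (1 + x) * (Real.exp (-(2 * x)) * (-2)) + 1) x := by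
    intro x
    have h1 : HasDerivAt (fun y : ℝ => -(2 * y)) (-2) x := by
      simpa [Pi.neg_def] using ((hasDerivAt_id x).const_mul (2 : ℝ)).neg
    have h2 : HasDerivAt (fun y : ℝ => Real.exp (-(2 * y)))
        (Real.exp (-(2 * x)) * (-2)) x := (Real.hasDerivAt_exp _).comp x h1
    have h3 : HasDerivAt (fun y : ℝ => (1 + y) * Real.exp (-(2 * y)))
        (1 * Real.exp (-(2 * x)) + (1 + x) * (Real.exp (-(2 * x)) * (-2))) x :=
      (((hasDerivAt_id x).const_add 1).mul h2)
    simpa [hg_def, one_mul, Pi.add_def] using h3.add (hasDerivAt_id x)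
  have hmono : MonotoneOn g (Set.Ici (0 : ℝ)) := by
    apply monotoneOn_of_deriv_nonneg (convex_Ici 0)
    · exact (Continuous.continuousOn (by
        continuity))
    · intro x hx
      exact (hderiv x).differentiableAt.differentiableWithinAt
    · intro x hx
      rw [(hderiv x).deriv]
      have h := Real.add_one_le_exp (2 * x)
      have hpos := Real.exp_pos (2 * x)
      have hxe : Real.exp (-(2 * x)) = 1 / Real.exp (2 * x) := by
        rw [Real.exp_neg]; ring
      rw [hxe]
      have hx0 : 0 < x := by
        rw [interior_Ici] at hx; exact hx
      have hfield : 1 / Real.exp (2 * x) + (1 + x) * (1 / Real.exp (2 * x) * (-2)) + 1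
          = (Real.exp (2 * x) - (1 + 2 * x)) / Real.exp (2 * x) := by
        field_simp
        ring
      rw [hfield]
      apply div_nonneg _ hpos.le
      linarith
  have h0 : g 0 = 1 := by simp [hg_def]
  have := hmono (Set.mem_Ici.2 le_rfl) (Set.mem_Ici.2 ht) ht
  rw [h0] at this
  simp only [hg_def] at this
  linarith

/-- For `c < 0` and all `λ ≥ 0`:
`ψ_{G,c} λ = λ²/(2(1−cλ)) ≤ (e^{2cλ} − 2cλ − 1)/(2c)² = ψ_{P,2c} λ`. -/
theorem subGamma_le_subPoisson_neg (c l : ℝ) (hc : c < 0) (hl : 0 ≤ l) :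
    l ^ 2 / (2 * (1 - c * l)) ≤ (Real.exp (2 * c * l) - 2 * c * l - 1) / (2 * c) ^ 2 := by
  set t : ℝ := -(c * l) with ht_def
  have ht : 0 ≤ t := by
    have : c * l ≤ 0 := mul_nonpos_of_nonpos_of_nonneg hc.le hl
    linarith
  have hkey := key_aux t ht
  have hexp : Real.exp (2 * c * l) = Real.exp (-(2 * t)) := by
    congr 1; rw [ht_def]; ring
  rw [hexp]
  have hden1 : (0 : ℝ) < 2 * (1 - c * l) := by nlinarith
  have hden2 : (0 : ℝ) < (2 * c) ^ 2 := by nlinarith [mul_pos (neg_pos.2 hc) (neg_pos.2 hc)]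
  rw [div_le_div_iff₀ hden1 hden2]
  have hl2 : c ^ 2 * l ^ 2 = t ^ 2 := by rw [ht_def]; ring
  have hcl : c * l = -t := by rw [ht_def]; ring
  nlinarith [Real.exp_pos (-(2 * t)), sq_nonneg t, sq_nonneg c,
    mul_pos hden1 hden2]
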